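/- arXiv:2407.03888 — 5 statements merged into one kernel-verified Lean document; each statement's English description precedes it below -/
import Mathlib

section
/- Let κ, c > 0, λ ≥ 0, ℓ > 0, T > 0 and set w = √(λ² + 4c/κ). Define α^{(ℓ)}(t) = -[(ℓκ(w-λ) + 4cκ) e^{w(T-t)} + ℓκ(w+λ) - 4cκ] / [(κ(w+λ)+ℓ) e^{w(T-t)} + κ(w-λ) - ℓ] for t ∈ [0,T]. Then α^{(ℓ)} solves the Riccati ODE (α^{(ℓ)})'(t) = -(α^{(ℓ)}(t))²/(2κ) + λ α^{(ℓ)}(t) + 2c on [0,T) with terminal condition α^{(ℓ)}(T) = -ℓ. -/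
set_option maxHeartbeats 1000000
set_option maxRecDepth 10000


open Real Set


theorem riccati_aux (κ c lam N D X : ℝ) (hκ : κ ≠ 0) (hD : D ≠ 0)
    (h : 2 * κ * (-X) = -(N ^ 2) - 2 * κ * lam * N * D + 4 * κ * c * D ^ 2) :
    -(-(N / D)) ^ 2 / (2 * κ) + lam * -(N / D) + 2 * c = -(X / D ^ 2) := by
  field_simp
  linear_combination (-1) * h

theorem riccati_solution_ell (κ c lam ℓ T : ℝ)
    (hκ : 0 < κ) (hc : 0 < c) (hlam : 0 ≤ lam) (hℓ : 0 < ℓ) (hT : 0 < T)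
    (w : ℝ) (hw : w = Real.sqrt (lam ^ 2 + 4 * c / κ))
    (α : ℝ → ℝ)
    (hα : ∀ t, α t =
      -(((ℓ * κ * (w - lam) + 4 * c * κ) * Real.exp (w * (T - t))
          + ℓ * κ * (w + lam) - 4 * c * κ) /
        ((κ * (w + lam) + ℓ) * Real.exp (w * (T - t)) + κ * (w - lam) - ℓ))) :
    (∀ t ∈ Icc (0 : ℝ) T,
      (κ * (w + lam) + ℓ) * Real.exp (w * (T - t)) + κ * (w - lam) - ℓ ≠ 0) ∧
    α T = -ℓ ∧
    (∀ t ∈ Ico (0 : ℝ) T,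
      HasDerivAt α (-(α t) ^ 2 / (2 * κ) + lam * α t + 2 * c) t) := by
  have harg : (0:ℝ) ≤ lam ^ 2 + 4 * c / κ := by positivity
  have hw2 : w ^ 2 = lam ^ 2 + 4 * c / κ := by
    rw [hw, Real.sq_sqrt harg]
  have hwnn : 0 ≤ w := hw ▸ Real.sqrt_nonneg _
  have hkey : κ * w ^ 2 = κ * lam ^ 2 + 4 * c := by
    rw [hw2]; field_simp
  have hwl : lam < w := by
    have h4 : 0 < 4 * c / κ := by positivity
    nlinarith [hw2, hwnn, h4]
  have hwpos : 0 < w := lt_of_le_of_lt hlam hwl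
  -- positivity of denominator for t ≤ T
  have hD : ∀ t : ℝ, t ≤ T →
      0 < (κ * (w + lam) + ℓ) * Real.exp (w * (T - t)) + κ * (w - lam) - ℓ := by
    intro t ht
    have h1 : (1:ℝ) ≤ Real.exp (w * (T - t)) := by
      apply Real.one_le_exp
      have : 0 ≤ T - t := by linarith
      positivity
    have hA : 0 < κ * (w + lam) + ℓ := by nlinarith
    nlinarith
  refine ⟨fun t ht => (hD t ht.2).ne', ?_, ?_⟩
  · rw [hα T]
    simp only [sub_self, mul_zero, Real.exp_zero, one_mul]
    rw [neg_eq_iff_eq_neg, div_eq_iff (by nlinarith : (κ * (w + lam) + ℓ) * 1 + κ * (w - lam) - ℓ ≠ 0)]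
    ring
  · intro t ht
    have hDt := hD t (le_of_lt ht.2)
    have hexp : HasDerivAt (fun s => Real.exp (w * (T - s)))
        (Real.exp (w * (T - t)) * (w * -1)) t :=
      (((hasDerivAt_id t).const_sub T).const_mul w).exp
    have hN : HasDerivAt
        (fun s => (ℓ * κ * (w - lam) + 4 * c * κ) * Real.exp (w * (T - s))
          + ℓ * κ * (w + lam) - 4 * c * κ)
        ((ℓ * κ * (w - lam) + 4 * c * κ) * (Real.exp (w * (T - t)) * (w * -1))) t :=
      ((hexp.const_mul _).add_const _).sub_const _
    have hDd : HasDerivAt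
        (fun s => (κ * (w + lam) + ℓ) * Real.exp (w * (T - s)) + κ * (w - lam) - ℓ)
        ((κ * (w + lam) + ℓ) * (Real.exp (w * (T - t)) * (w * -1))) t :=
      ((hexp.const_mul _).add_const _).sub_const _
    have hq := (hN.div hDd hDt.ne').neg
    have hfun : α = fun s =>
      -(((ℓ * κ * (w - lam) + 4 * c * κ) * Real.exp (w * (T - s))
          + ℓ * κ * (w + lam) - 4 * c * κ) /
        ((κ * (w + lam) + ℓ) * Real.exp (w * (T - s)) + κ * (w - lam) - ℓ)) :=
      funext hα
    rw [hα t, hfun]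
    convert hq using 1
    · rfl
    · rfl
    · rfl
    have hD0 : (κ * (w + lam) + ℓ) * Real.exp (w * (T - t)) + κ * (w - lam) - ℓ ≠ 0 :=
      hDt.ne'
    refine riccati_aux κ c lam _ _ _ hκ.ne' hD0 ?_
    linear_combination (κ * (Real.exp (w * (T - t)) - 1) ^ 2 *
      (ℓ ^ 2 + 2 * κ * lam * ℓ - 4 * κ * c)) * hkey
end

section
/- With κ, c > 0, λ ≥ 0, T > 0, w = √(λ² + 4c/κ), and α^{(ℓ)}(t) = -[(ℓκ(w-λ)+4cκ)e^{w(T-t)} + ℓκ(w+λ) - 4cκ]/[(κ(w+λ)+ℓ)e^{w(T-t)} + κ(w-λ) - ℓ], for each fixed t ∈ [0,T) the limit as ℓ → ∞ of α^{(ℓ)}(t) equals α*(t) = -κ(w - λ) - 2κw/(e^{w(T-t)} - 1), and α*(t) < 0. -/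
open Real Set Filter Topology

theorem alpha_ell_tendsto (κ c lam T : ℝ)
    (hκ : 0 < κ) (hc : 0 < c) (hlam : 0 ≤ lam) (hT : 0 < T)
    (w : ℝ) (hw : w = Real.sqrt (lam ^ 2 + 4 * c / κ))
    (α : ℝ → ℝ → ℝ)
    (hα : ∀ ℓ t, α ℓ t =
      -(((ℓ * κ * (w - lam) + 4 * c * κ) * Real.exp (w * (T - t))
          + ℓ * κ * (w + lam) - 4 * c * κ) /
        ((κ * (w + lam) + ℓ) * Real.exp (w * (T - t)) + κ * (w - lam) - ℓ)))
    (t : ℝ) (ht : t ∈ Ico (0 : ℝ) T)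
    (αstar : ℝ) (hαstar : αstar = -κ * (w - lam) - 2 * κ * w / (Real.exp (w * (T - t)) - 1)) :
    Tendsto (fun ℓ => α ℓ t) atTop (nhds αstar) ∧ αstar < 0 := by
  obtain ⟨ht0, htT⟩ := ht
  have hq : 0 < lam ^ 2 + 4 * c / κ := by positivity
  have hwpos : 0 < w := hw ▸ Real.sqrt_pos.mpr hq
  have hwlam : lam < w := by
    have h1 : lam = Real.sqrt (lam ^ 2) := by rw [Real.sqrt_sq hlam]
    rw [hw, h1]
    exact Real.sqrt_lt_sqrt (by positivity) (by nlinarith [div_pos (by linarith : (0:ℝ) < 4 * c) hκ])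
  have hE : 1 < Real.exp (w * (T - t)) := by
    rw [show (1:ℝ) = Real.exp 0 by simp]
    exact Real.exp_lt_exp.mpr (by nlinarith)
  set E := Real.exp (w * (T - t)) with hEdef
  have hC : E - 1 ≠ 0 := ne_of_gt (by linarith)
  set A := κ * (w - lam) * E + κ * (w + lam) with hA
  set B := 4 * c * κ * E - 4 * c * κ with hB
  set D := κ * (w + lam) * E + κ * (w - lam) with hD
  have hstar : αstar = -(A / (E - 1)) := by
    rw [hαstar, hA]
    field_simp
    ring
  constructor
  · have h1 : Tendsto (fun ℓ : ℝ => A + B / ℓ) atTop (nhds (A + 0)) :=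
      tendsto_const_nhds.add (Tendsto.div_atTop tendsto_const_nhds tendsto_id)
    have h2 : Tendsto (fun ℓ : ℝ => (E - 1) + D / ℓ) atTop (nhds ((E - 1) + 0)) :=
      tendsto_const_nhds.add (Tendsto.div_atTop tendsto_const_nhds tendsto_id)
    have hlim : Tendsto (fun ℓ : ℝ => -((A + B / ℓ) / ((E - 1) + D / ℓ))) atTop (nhds αstar) := by
      have := (h1.div h2 (by simpa using hC)).neg
      simpa [hstar] using this
    refine hlim.congr' ?_
    filter_upwards [eventually_gt_atTop (0:ℝ)] with ℓ hℓ
    have hℓ' : ℓ ≠ 0 := ne_of_gt hℓ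
    rw [hα]
    have e1 : A + B / ℓ = (ℓ * A + B) / ℓ := by field_simp
    have e2 : (E - 1) + D / ℓ = (ℓ * (E - 1) + D) / ℓ := by field_simp
    have e3 : ((ℓ * A + B) / ℓ) / ((ℓ * (E - 1) + D) / ℓ) = (ℓ * A + B) / (ℓ * (E - 1) + D) := by
      rw [div_div_div_cancel_right₀ hℓ']
    rw [e1, e2, e3]
    have e4 : (ℓ * κ * (w - lam) + 4 * c * κ) * E + ℓ * κ * (w + lam) - 4 * c * κ
        = ℓ * A + B := by rw [hA, hB]; ring
    have e5 : (κ * (w + lam) + ℓ) * E + κ * (w - lam) - ℓ = ℓ * (E - 1) + D := by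
      rw [hD]; ring
    rw [e4, e5]
  · have h1 : 0 < 2 * κ * w / (E - 1) := div_pos (by positivity) (by linarith)
    have h2 : 0 < κ * (w - lam) := by nlinarith
    rw [hαstar]
    nlinarith
end

section
/- Let κ, c > 0, λ ≥ 0, T > 0, w = √(λ² + 4c/κ), and α*(t) = -κ(w-λ) - 2κw/(e^{w(T-t)} - 1) for t ∈ [0,T). Then α* satisfies the Riccati equation (α*)'(t) = -(α*(t))²/(2κ) + λ α*(t) + 2c on [0,T), and α*(t) → -∞ as t → T⁻. -/
open Real Set Filter Topology

theorem alpha_star_riccati_and_blowup (κ c lam T : ℝ)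
    (hκ : 0 < κ) (hc : 0 < c) (hlam : 0 ≤ lam) (hT : 0 < T)
    (w : ℝ) (hw : w = Real.sqrt (lam ^ 2 + 4 * c / κ))
    (αstar : ℝ → ℝ)
    (hα : ∀ t, αstar t = -κ * (w - lam) - 2 * κ * w / (Real.exp (w * (T - t)) - 1)) :
    (∀ t ∈ Ico (0 : ℝ) T,
      HasDerivAt αstar (-(αstar t) ^ 2 / (2 * κ) + lam * αstar t + 2 * c) t) ∧
    Tendsto αstar (nhdsWithin T (Iio T)) atBot := by
  have harg : 0 < lam ^ 2 + 4 * c / κ := by positivity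
  have hwpos : 0 < w := hw ▸ Real.sqrt_pos.mpr harg
  have hw2 : w ^ 2 = lam ^ 2 + 4 * c / κ := by
    rw [hw, Real.sq_sqrt harg.le]
  have hc' : c = κ * (w ^ 2 - lam ^ 2) / 4 := by
    field_simp at hw2 ⊢; linarith
  have hfun : αstar = fun t => -κ * (w - lam) - 2 * κ * w / (Real.exp (w * (T - t)) - 1) :=
    funext hα
  constructor
  · intro t ht
    have htT : t < T := ht.2
    have hE : 1 < Real.exp (w * (T - t)) := by
      have h0 : 0 < w * (T - t) := by
        have : 0 < T - t := by linarith
        positivity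
      calc (1:ℝ) = Real.exp 0 := Real.exp_zero.symm
        _ < Real.exp (w * (T - t)) := Real.exp_lt_exp.mpr h0
    have hne : Real.exp (w * (T - t)) - 1 ≠ 0 := by linarith
    have h1 : HasDerivAt (fun s : ℝ => w * (T - s)) (-w) t := by
      have := ((hasDerivAt_id t).const_sub T).const_mul w
      simpa using this
    have h2 : HasDerivAt (fun s : ℝ => Real.exp (w * (T - s)))
        (Real.exp (w * (T - t)) * (-w)) t := h1.exp
    have h3 : HasDerivAt (fun s : ℝ => Real.exp (w * (T - s)) - 1)
        (Real.exp (w * (T - t)) * (-w)) t := h2.sub_const 1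
    have h4 : HasDerivAt (fun s : ℝ => 2 * κ * w / (Real.exp (w * (T - s)) - 1))
        ((0 * (Real.exp (w * (T - t)) - 1) - 2 * κ * w * (Real.exp (w * (T - t)) * (-w)))
          / (Real.exp (w * (T - t)) - 1) ^ 2) t :=
      (hasDerivAt_const t (2 * κ * w)).div h3 hne
    have h5 := h4.const_sub (-κ * (w - lam))
    rw [hfun]
    convert h5 using 1
    case e'_4 => rfl
    case e'_5 => rfl
    simp only
    rw [hc']
    field_simp
    ring
  · rw [hfun]
    have hlim : Tendsto (fun t => Real.exp (w * (T - t)) - 1) (𝓝[<] T) (𝓝[>] (0:ℝ)) := by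
      apply tendsto_nhdsWithin_of_tendsto_nhds_of_eventually_within
      · have hcont : Continuous fun t : ℝ => Real.exp (w * (T - t)) - 1 :=
          ((continuous_const.mul (continuous_const.sub continuous_id)).rexp).sub continuous_const
        have := hcont.tendsto T
        simp only [sub_self, mul_zero, Real.exp_zero, sub_self] at this
        exact this.mono_left nhdsWithin_le_nhds
      · filter_upwards [self_mem_nhdsWithin] with t (ht : t < T)
        have h0 : 0 < w * (T - t) := by
          have : 0 < T - t := by linarith
          positivity
        have : 1 < Real.exp (w * (T - t)) := by
          calc (1:ℝ) = Real.exp 0 := Real.exp_zero.symm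
            _ < _ := Real.exp_lt_exp.mpr h0
        simpa [Set.mem_Ioi] using by linarith
    have hinv : Tendsto (fun t => (Real.exp (w * (T - t)) - 1)⁻¹) (𝓝[<] T) atTop :=
      hlim.inv_tendsto_nhdsGT_zero
    have hdiv : Tendsto (fun t => 2 * κ * w / (Real.exp (w * (T - t)) - 1)) (𝓝[<] T) atTop := by
      simp only [div_eq_mul_inv]
      exact hinv.const_mul_atTop (by positivity)
    have hneg : Tendsto (fun t => -(2 * κ * w / (Real.exp (w * (T - t)) - 1))) (𝓝[<] T) atBot :=
      tendsto_neg_atTop_atBot.comp hdiv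
    have := tendsto_atBot_add_const_left (𝓝[<] T) (-κ * (w - lam)) hneg
    simpa [sub_eq_add_neg] using this
end

section
/- Let p > 1, γ > 0, κ > 0, λ > 0 and α < 0. Define ψ̃ = ((1/π)√(-λκα/2))^{(p-1)/p} · (p/(p-1)) · γ^{1/p}. Then ψ̃ > 0 and the function π(u₁,u₂) = ((p-1)/(γp))^{1/(p-1)} ( ψ̃ - κ(u₁ - m₁)² + (αλ/2)(u₂ - m₂)² )_+^{1/(p-1)} integrates to 1 over ℝ², for any real centers m₁, m₂. -/
open Real MeasureTheory

open Set


lemma cont_maxpow {s : ℝ} (hs : 0 < s) : Continuous (fun t : ℝ => max t 0 ^ s) :=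
  (Real.continuous_rpow_const hs.le).comp (continuous_id.max continuous_const)

lemma radial {ψ s : ℝ} (hψ : 0 < ψ) (hs : 0 < s) :
    ∫ r in Ioi (0:ℝ), r * max (ψ - r ^ 2) 0 ^ s = ψ ^ (s + 1) / (2 * (s + 1)) := by
  have hsq : (Real.sqrt ψ) ^ 2 = ψ := Real.sq_sqrt hψ.le
  have hsqpos : 0 < Real.sqrt ψ := Real.sqrt_pos.2 hψ
  have hcont : Continuous (fun r : ℝ => r * max (ψ - r ^ 2) 0 ^ s) :=
    continuous_id.mul ((cont_maxpow hs).comp (by continuity))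
  rw [← Ioc_union_Ioi_eq_Ioi hsqpos.le]
  rw [setIntegral_union (Ioc_disjoint_Ioi le_rfl) measurableSet_Ioi
      (hcont.continuousOn.integrableOn_compact isCompact_Icc |>.mono_set Ioc_subset_Icc_self)
      ?_]
  · have hz : ∫ r in Ioi (Real.sqrt ψ), r * max (ψ - r ^ 2) 0 ^ s = 0 := by
      rw [setIntegral_congr_fun measurableSet_Ioi (g := fun _ => (0:ℝ)) ?_, integral_zero]
      intro r hr
      have : ψ - r ^ 2 < 0 := by
        have : Real.sqrt ψ < r := hr
        nlinarith
      simp [max_eq_right this.le, Real.zero_rpow hs.ne']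
    rw [hz, add_zero]
    have hmax : ∫ r in Ioc (0:ℝ) (Real.sqrt ψ), r * max (ψ - r ^ 2) 0 ^ s
        = ∫ r in Ioc (0:ℝ) (Real.sqrt ψ), r * (ψ - r ^ 2) ^ s := by
      refine setIntegral_congr_fun measurableSet_Ioc fun r hr => ?_
      have : 0 ≤ ψ - r ^ 2 := by
        rcases hr with ⟨h1, h2⟩
        nlinarith [sq_nonneg r]
      rw [max_eq_left this]
    rw [hmax, ← intervalIntegral.integral_of_le hsqpos.le]
    have key : ∀ r ∈ uIcc (0:ℝ) (Real.sqrt ψ),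
        HasDerivAt (fun r : ℝ => -(ψ - r ^ 2) ^ (s + 1) / (2 * (s + 1)))
          (r * (ψ - r ^ 2) ^ s) r := by
      intro r _
      have h1 : HasDerivAt (fun r : ℝ => ψ - r ^ 2) (-(2 * r)) r := by
        simpa using (hasDerivAt_pow 2 r).const_sub ψ
      have h2 := h1.rpow_const (p := s + 1) (Or.inr (by linarith))
      have h3 := (h2.neg).div_const (2 * (s + 1))
      refine h3.congr_deriv ?_
      have : s + 1 - 1 = s := by ring
      rw [this]
      field_simp
    rw [intervalIntegral.integral_eq_sub_of_hasDerivAt key ?_]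
    · rw [hsq, sub_self, Real.zero_rpow (by linarith : s + 1 ≠ 0)]
      norm_num
      ring
    · apply ContinuousOn.intervalIntegrable
      exact (continuous_id.mul (Real.continuous_rpow_const hs.le |>.comp (by continuity))).continuousOn
  · refine (integrable_zero _ _ (volume.restrict (Ioi (Real.sqrt ψ)))).congr ?_
    filter_upwards [ae_restrict_mem measurableSet_Ioi] with r hr
    have : ψ - r ^ 2 < 0 := by
      have : Real.sqrt ψ < r := hr
      nlinarith
    simp [max_eq_right this.le, Real.zero_rpow hs.ne']

lemma integrable_aux {a b ψ s : ℝ} (ha : 0 < a) (hb : 0 < b) (hs : 0 < s) (m₁ m₂ : ℝ) :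
    Integrable (fun u : ℝ × ℝ =>
      max (ψ - a * (u.1 - m₁) ^ 2 - b * (u.2 - m₂) ^ 2) 0 ^ s) := by
  apply Continuous.integrable_of_hasCompactSupport
  · exact (cont_maxpow hs).comp (by fun_prop)
  · set R : ℝ := Real.sqrt (|ψ| * (a⁻¹ + b⁻¹)) with hR
    have hR0 : 0 ≤ R := Real.sqrt_nonneg _
    have hR2 : R ^ 2 = |ψ| * (a⁻¹ + b⁻¹) :=
      Real.sq_sqrt (by positivity)
    have haR : ψ ≤ a * R ^ 2 := by
      rw [hR2]
      have h1 : a * (|ψ| * (a⁻¹ + b⁻¹)) = |ψ| + |ψ| * (a / b) := by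
        field_simp
      rw [h1]
      have : 0 ≤ |ψ| * (a / b) := by positivity
      nlinarith [le_abs_self ψ]
    have hbR : ψ ≤ b * R ^ 2 := by
      rw [hR2]
      have h1 : b * (|ψ| * (a⁻¹ + b⁻¹)) = |ψ| * (b / a) + |ψ| := by
        field_simp
      rw [h1]
      have : 0 ≤ |ψ| * (b / a) := by positivity
      nlinarith [le_abs_self ψ]
    apply HasCompactSupport.intro (K := Icc (m₁ - R) (m₁ + R) ×ˢ Icc (m₂ - R) (m₂ + R))
      ((isCompact_Icc).prod isCompact_Icc)
    intro u hu
    have : ψ - a * (u.1 - m₁) ^ 2 - b * (u.2 - m₂) ^ 2 ≤ 0 := by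
      rw [Set.mem_prod, not_and_or] at hu
      rcases hu with h | h
      · have : R < |u.1 - m₁| := by
          rcases abs_cases (u.1 - m₁) with ⟨he, _⟩ | ⟨he, _⟩ <;>
            (simp only [Set.mem_Icc, not_and_or, not_le] at h; rcases h with h | h <;> linarith)
        nlinarith [sq_nonneg (u.2 - m₂), sq_abs (u.1 - m₁), mul_le_mul_of_nonneg_left
          (pow_le_pow_left₀ hR0 this.le 2) ha.le]
      · have : R < |u.2 - m₂| := by
          rcases abs_cases (u.2 - m₂) with ⟨he, _⟩ | ⟨he, _⟩ <;>
            (simp only [Set.mem_Icc, not_and_or, not_le] at h; rcases h with h | h <;> linarith)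
        nlinarith [sq_nonneg (u.1 - m₁), sq_abs (u.2 - m₂), mul_le_mul_of_nonneg_left
          (pow_le_pow_left₀ hR0 this.le 2) hb.le]
    simp [max_eq_right this, Real.zero_rpow hs.ne']

lemma polar_step {ψ s : ℝ} (hψ : 0 < ψ) (hs : 0 < s) :
    ∫ u : ℝ × ℝ, max (ψ - u.1 ^ 2 - u.2 ^ 2) 0 ^ s
      = (2 * π) * ∫ r in Ioi (0:ℝ), r * max (ψ - r ^ 2) 0 ^ s := by
  rw [← integral_comp_polarCoord_symm (fun u : ℝ × ℝ => max (ψ - u.1 ^ 2 - u.2 ^ 2) 0 ^ s)]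
  have htarget : polarCoord.target = Ioi (0:ℝ) ×ˢ Ioo (-π) π := rfl
  have hsymm : ∀ p : ℝ × ℝ, polarCoord.symm p = (p.1 * Real.cos p.2, p.1 * Real.sin p.2) :=
    fun p => rfl
  have hcongr : ∀ p ∈ polarCoord.target,
      p.1 • max (ψ - (polarCoord.symm p).1 ^ 2 - (polarCoord.symm p).2 ^ 2) 0 ^ s
        = (fun r : ℝ => r * max (ψ - r ^ 2) 0 ^ s) p.1 * (fun _ : ℝ => (1:ℝ)) p.2 := by
    intro p _
    rw [hsymm]
    have : (p.1 * Real.cos p.2) ^ 2 + (p.1 * Real.sin p.2) ^ 2 = p.1 ^ 2 := by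
      have := Real.sin_sq_add_cos_sq p.2
      nlinarith
    simp only [smul_eq_mul, mul_one]
    have h2 : ψ - (p.1 * Real.cos p.2) ^ 2 - (p.1 * Real.sin p.2) ^ 2 = ψ - p.1 ^ 2 := by
      linarith
    rw [h2]
  rw [setIntegral_congr_fun (polarCoord.open_target.measurableSet) hcongr, htarget]
  rw [Measure.volume_eq_prod]
  rw [MeasureTheory.setIntegral_prod_mul (μ := (volume : Measure ℝ)) (ν := (volume : Measure ℝ))
    (fun r : ℝ => r * max (ψ - r ^ 2) 0 ^ s) (fun _ : ℝ => (1:ℝ)) (Ioi 0) (Ioo (-π) π)]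
  have : ∫ y in Ioo (-π) π, (1:ℝ) = 2 * π := by
    simp [Real.volume_Ioo]
    rw [max_eq_left (by positivity)]
    ring
  rw [this]
  ring

lemma oneD {b s : ℝ} (hb : 0 < b) (hs : 0 < s) (c m : ℝ) :
    ∫ y : ℝ, max (c - b * (y - m) ^ 2) 0 ^ s
      = (Real.sqrt b)⁻¹ * ∫ y : ℝ, max (c - y ^ 2) 0 ^ s := by
  have h1 : ∫ y : ℝ, max (c - b * (y - m) ^ 2) 0 ^ s
      = ∫ y : ℝ, max (c - b * y ^ 2) 0 ^ s :=
    integral_sub_right_eq_self (fun y => max (c - b * y ^ 2) 0 ^ s) m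
  rw [h1]
  have h2 := Measure.integral_comp_mul_left
    (fun y => max (c - y ^ 2) 0 ^ s) (Real.sqrt b)
  have h3 : ∀ y : ℝ, max (c - (Real.sqrt b * y) ^ 2) 0 ^ s
      = max (c - b * y ^ 2) 0 ^ s := by
    intro y
    rw [mul_pow, Real.sq_sqrt hb.le]
  simp_rw [h3] at h2
  rw [h2, abs_of_nonneg (by positivity), smul_eq_mul]

lemma twoD {a b ψ s : ℝ} (ha : 0 < a) (hb : 0 < b) (hψ : 0 < ψ) (hs : 0 < s) (m₁ m₂ : ℝ) :
    ∫ u : ℝ × ℝ, max (ψ - a * (u.1 - m₁) ^ 2 - b * (u.2 - m₂) ^ 2) 0 ^ s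
      = π / Real.sqrt (a * b) * (ψ ^ (s + 1) / (s + 1)) := by
  have hsa : (0:ℝ) < Real.sqrt a := Real.sqrt_pos.2 ha
  have hsb : (0:ℝ) < Real.sqrt b := Real.sqrt_pos.2 hb
  calc
    ∫ u : ℝ × ℝ, max (ψ - a * (u.1 - m₁) ^ 2 - b * (u.2 - m₂) ^ 2) 0 ^ s
        = ∫ x : ℝ, ∫ y : ℝ, max (ψ - a * (x - m₁) ^ 2 - b * (y - m₂) ^ 2) 0 ^ s := by
      have hint := integrable_aux (ψ := ψ) (s := s) ha hb hs m₁ m₂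
      rw [Measure.volume_eq_prod] at hint ⊢
      rw [integral_prod _ hint]
    _ = ∫ x : ℝ, (Real.sqrt b)⁻¹ * ∫ y : ℝ, max (ψ - a * (x - m₁) ^ 2 - y ^ 2) 0 ^ s := by
      simp_rw [oneD hb hs]
    _ = (Real.sqrt b)⁻¹ * ∫ x : ℝ, ∫ y : ℝ, max (ψ - a * (x - m₁) ^ 2 - y ^ 2) 0 ^ s :=
      integral_const_mul _ _
    _ = (Real.sqrt b)⁻¹ * ∫ x : ℝ, ∫ y : ℝ, max (ψ - a * x ^ 2 - y ^ 2) 0 ^ s := by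
      congr 1
      exact integral_sub_right_eq_self
        (fun t => ∫ y : ℝ, max (ψ - a * t ^ 2 - y ^ 2) 0 ^ s) m₁
    _ = (Real.sqrt b)⁻¹ * ((Real.sqrt a)⁻¹ *
          ∫ x : ℝ, ∫ y : ℝ, max (ψ - x ^ 2 - y ^ 2) 0 ^ s) := by
      congr 1
      have h2 := Measure.integral_comp_mul_left
        (fun t => ∫ y : ℝ, max (ψ - t ^ 2 - y ^ 2) 0 ^ s) (Real.sqrt a)
      have h3 : ∀ x : ℝ, (∫ y : ℝ, max (ψ - (Real.sqrt a * x) ^ 2 - y ^ 2) 0 ^ s)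
          = ∫ y : ℝ, max (ψ - a * x ^ 2 - y ^ 2) 0 ^ s := by
        intro x
        rw [mul_pow, Real.sq_sqrt ha.le]
      simp_rw [h3] at h2
      rw [h2, abs_of_nonneg (by positivity), smul_eq_mul]
    _ = (Real.sqrt b)⁻¹ * ((Real.sqrt a)⁻¹ *
          ∫ u : ℝ × ℝ, max (ψ - u.1 ^ 2 - u.2 ^ 2) 0 ^ s) := by
      congr 1
      have hint := integrable_aux (ψ := ψ) (s := s) one_pos one_pos hs 0 0
      simp only [one_mul, sub_zero] at hint
      rw [Measure.volume_eq_prod] at hint ⊢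
      rw [integral_prod _ hint]
    _ = π / Real.sqrt (a * b) * (ψ ^ (s + 1) / (s + 1)) := by
      rw [polar_step hψ hs, radial hψ hs, Real.sqrt_mul ha.le]
      have h1 : s + 1 ≠ 0 := by linarith
      field_simp

theorem qGaussian_ellipse_normalization (p γ κ lam α m₁ m₂ : ℝ)
    (hp : 1 < p) (hγ : 0 < γ) (hκ : 0 < κ) (hlam : 0 < lam) (hα : α < 0)
    (ψ : ℝ)
    (hψ : ψ = ((1 / Real.pi) * Real.sqrt (-lam * κ * α / 2)) ^ ((p - 1) / p)
      * (p / (p - 1)) * γ ^ (1 / p))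
    (ρ : ℝ × ℝ → ℝ)
    (hρ : ∀ u : ℝ × ℝ, ρ u = ((p - 1) / (γ * p)) ^ (1 / (p - 1)) *
      (max (ψ - κ * (u.1 - m₁) ^ 2 + α * lam / 2 * (u.2 - m₂) ^ 2) 0) ^ (1 / (p - 1))) :
    0 < ψ ∧ (∫ u : ℝ × ℝ, ρ u) = 1 := by
  have hπ := Real.pi_pos
  have hp1 : (0:ℝ) < p - 1 := by linarith
  have hs : (0:ℝ) < 1 / (p - 1) := by positivity
  have hq0 : (0:ℝ) < -lam * κ * α / 2 := by
    nlinarith [mul_pos (mul_pos hlam hκ) (neg_pos.2 hα)]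
  have hq : (0:ℝ) < Real.sqrt (-lam * κ * α / 2) := Real.sqrt_pos.2 hq0
  have hbase : (0:ℝ) < 1 / π * Real.sqrt (-lam * κ * α / 2) := by positivity
  have hB : (0:ℝ) < p / (p - 1) := by positivity
  have hψpos : 0 < ψ := by rw [hψ]; positivity
  refine ⟨hψpos, ?_⟩
  simp_rw [hρ]
  rw [integral_const_mul]
  have hb : (0:ℝ) < -(α * lam / 2) := by nlinarith
  have hform : ∀ u : ℝ × ℝ, ψ - κ * (u.1 - m₁) ^ 2 + α * lam / 2 * (u.2 - m₂) ^ 2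
      = ψ - κ * (u.1 - m₁) ^ 2 - -(α * lam / 2) * (u.2 - m₂) ^ 2 := fun u => by ring
  simp_rw [hform]
  rw [twoD hκ hb hψpos hs m₁ m₂]
  have habk : κ * -(α * lam / 2) = -lam * κ * α / 2 := by ring
  rw [habk]
  set q := Real.sqrt (-lam * κ * α / 2) with hqdef
  have e1 : (1:ℝ) / (p - 1) + 1 = p / (p - 1) := by field_simp; ring
  have hψpow : ψ ^ (1 / (p - 1) + 1)
      = (1 / π * q) * ((p / (p - 1)) ^ (1 / (p - 1)) * (p / (p - 1))) * γ ^ (1 / (p - 1)) := by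
    rw [e1, hψ]
    rw [Real.mul_rpow (by positivity) (by positivity),
        Real.mul_rpow (by positivity) (by positivity)]
    rw [← Real.rpow_mul hbase.le, ← Real.rpow_mul hγ.le]
    have e2 : (p - 1) / p * (p / (p - 1)) = 1 := by
      field_simp
    have e3 : 1 / p * (p / (p - 1)) = 1 / (p - 1) := by
      field_simp
    rw [e2, e3, Real.rpow_one, ← e1,
      Real.rpow_add (by rw [e1]; exact hB), Real.rpow_one]
  rw [hψpow, e1]
  have hcomb : ((p - 1) / (γ * p)) ^ (1 / (p - 1))
      * ((p / (p - 1)) ^ (1 / (p - 1)) * γ ^ (1 / (p - 1))) = 1 := by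
    rw [← Real.mul_rpow (by positivity) hγ.le, ← Real.mul_rpow (by positivity) (by positivity)]
    have : (p - 1) / (γ * p) * (p / (p - 1) * γ) = 1 := by
      field_simp
    rw [this, Real.one_rpow]
  set X := ((p - 1) / (γ * p)) ^ (1 / (p - 1))
  set Y := (p / (p - 1)) ^ (1 / (p - 1))
  set Z := γ ^ (1 / (p - 1))
  have hπ' : π ≠ 0 := hπ.ne'
  have hq' : q ≠ 0 := hq.ne'
  have hB' : p / (p - 1) ≠ 0 := hB.ne'
  have hp1' : p - 1 ≠ 0 := hp1.ne'
  rw [show π / q * (1 / π * q * (Y * (p / (p - 1))) * Z / (p / (p - 1))) = Y * Z from by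
    field_simp]
  exact hcomb
end

section
/- Let p > 1, γ > 0, κ > 0, λ > 0, α < 0, m₁, m₂ ∈ ℝ, and ψ̃ = ((1/π)√(-λκα/2))^{(p-1)/p}(p/(p-1))γ^{1/p}. For the density π(u₁,u₂) = ((p-1)/(γp))^{1/(p-1)}(ψ̃ - κ(u₁-m₁)² + (αλ/2)(u₂-m₂)²)_+^{1/(p-1)} on ℝ², the first moments are ∫ u₁ π du = m₁ and ∫ u₂ π du = m₂, and the second moments are ∫ u₁² π du = ψ̃(p-1)/(2κ(2p-1)) + m₁² and ∫ u₂² π du = -ψ̃(p-1)/(αλ(2p-1)) + m₂². -/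
open Real MeasureTheory Set

noncomputable def gq (q : ℝ) (v : ℝ × ℝ) : ℝ := max (1 - v.1 ^ 2 - v.2 ^ 2) 0 ^ q

lemma gq_cont {q : ℝ} (hq : 0 < q) : Continuous (gq q) := by
  apply Continuous.rpow_const (by continuity)
  exact fun v => Or.inr hq.le

lemma gq_zero {q : ℝ} (hq : 0 < q) {v : ℝ × ℝ} (hv : 1 - v.1 ^ 2 - v.2 ^ 2 ≤ 0) :
    gq q v = 0 := by
  unfold gq
  rw [max_eq_right hv, Real.zero_rpow hq.ne']

lemma gq_hcs {q : ℝ} (hq : 0 < q) : HasCompactSupport (gq q) := by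
  apply HasCompactSupport.intro (isCompact_closedBall (0 : ℝ × ℝ) 1)
  intro v hv
  apply gq_zero hq
  simp only [Metric.mem_closedBall, not_le, dist_zero_right, Prod.norm_def,
    Real.norm_eq_abs] at hv
  rcases lt_sup_iff.mp hv with h | h
  · nlinarith [sq_abs v.1, sq_abs v.2, sq_nonneg v.2]
  · nlinarith [sq_abs v.1, sq_abs v.2, sq_nonneg v.1]

lemma gq_integrable {q : ℝ} (hq : 0 < q) : Integrable (gq q) :=
  (gq_cont hq).integrable_of_hasCompactSupport (gq_hcs hq)

lemma gq_int {q : ℝ} (hq : 0 < q) {P : ℝ × ℝ → ℝ} (hP : Continuous P) :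
    Integrable (fun v : ℝ × ℝ => P v * gq q v) :=
  (hP.mul (gq_cont hq)).integrable_of_hasCompactSupport
    (HasCompactSupport.mul_left (gq_hcs hq))

lemma int01_1 {q : ℝ} (hq : 0 < q) :
    ∫ r in (0:ℝ)..1, r ^ 1 * (1 - r ^ 2) ^ q = 1 / (2 * (q + 1)) := by
  have hq1 : (0:ℝ) < q + 1 := by linarith
  have key := intervalIntegral.integral_eq_sub_of_hasDerivAt_of_le
    (f := fun r : ℝ => -(1 - r ^ 2) ^ (q + 1) / (2 * (q + 1)))
    (f' := fun r : ℝ => r ^ 1 * (1 - r ^ 2) ^ q) zero_le_one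
    ?_ ?_ ?_
  · rw [key]
    rw [show (1:ℝ) - 1 ^ 2 = 0 by ring, show (1:ℝ) - 0 ^ 2 = 1 by ring,
      Real.zero_rpow hq1.ne', Real.one_rpow]
    field_simp
    ring
  · apply Continuous.continuousOn
    have : Continuous fun r : ℝ => (1 - r ^ 2) ^ (q + 1) := by
      apply Continuous.rpow_const (by continuity)
      exact fun v => Or.inr hq1.le
    continuity
  · intro x hx
    have hx1 : (1:ℝ) - x ^ 2 ≠ 0 := by nlinarith [hx.1, hx.2]
    have h1 : HasDerivAt (fun r : ℝ => 1 - r ^ 2) (-(2 * x)) x := by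
      simpa using ((hasDerivAt_pow 2 x).const_sub 1)
    have h2 := (h1.rpow_const (p := q + 1) (Or.inl hx1)).neg.div_const (2 * (q + 1))
    refine h2.congr_deriv ?_
    rw [show q + 1 - 1 = q by ring]
    field_simp
  · apply ContinuousOn.intervalIntegrable
    apply ContinuousOn.mul (by fun_prop)
    apply ContinuousOn.rpow_const (by fun_prop)
    exact fun x _ => Or.inr hq.le

lemma int01_3 {q : ℝ} (hq : 0 < q) :
    ∫ r in (0:ℝ)..1, r ^ 3 * (1 - r ^ 2) ^ q = 1 / (2 * (q + 1) * (q + 2)) := by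
  have hq1 : (0:ℝ) < q + 1 := by linarith
  have hq2 : (0:ℝ) < q + 2 := by linarith
  have key := intervalIntegral.integral_eq_sub_of_hasDerivAt_of_le
    (f := fun r : ℝ => (1 - r ^ 2) ^ (q + 2) / (2 * (q + 2))
      - (1 - r ^ 2) ^ (q + 1) / (2 * (q + 1)))
    (f' := fun r : ℝ => r ^ 3 * (1 - r ^ 2) ^ q) zero_le_one
    ?_ ?_ ?_
  · rw [key]
    rw [show (1:ℝ) - 1 ^ 2 = 0 by ring, show (1:ℝ) - 0 ^ 2 = 1 by ring,
      Real.zero_rpow hq1.ne', Real.zero_rpow hq2.ne', Real.one_rpow, Real.one_rpow]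
    field_simp
    ring
  · apply Continuous.continuousOn
    have c1 : Continuous fun r : ℝ => (1 - r ^ 2) ^ (q + 1) := by
      apply Continuous.rpow_const (by continuity)
      exact fun v => Or.inr hq1.le
    have c2 : Continuous fun r : ℝ => (1 - r ^ 2) ^ (q + 2) := by
      apply Continuous.rpow_const (by continuity)
      exact fun v => Or.inr hq2.le
    continuity
  · intro x hx
    have hx1 : (1:ℝ) - x ^ 2 ≠ 0 := by nlinarith [hx.1, hx.2]
    have h1 : HasDerivAt (fun r : ℝ => 1 - r ^ 2) (-(2 * x)) x := by
      simpa using ((hasDerivAt_pow 2 x).const_sub 1)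
    have h2 := ((h1.rpow_const (p := q + 2) (Or.inl hx1)).div_const (2 * (q + 2))).sub
      ((h1.rpow_const (p := q + 1) (Or.inl hx1)).div_const (2 * (q + 1)))
    refine h2.congr_deriv ?_
    rw [show q + 2 - 1 = q + 1 by ring, show q + 1 - 1 = q by ring,
      Real.rpow_add_one hx1]
    field_simp
    ring
  · apply ContinuousOn.intervalIntegrable
    apply ContinuousOn.mul (by fun_prop)
    apply ContinuousOn.rpow_const (by fun_prop)
    exact fun x _ => Or.inr hq.le

lemma radial_s10 {q : ℝ} (hq : 0 < q) (n : ℕ) (V : ℝ)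
    (hval : ∫ r in (0:ℝ)..1, r ^ n * (1 - r ^ 2) ^ q = V) :
    ∫ r in Ioi (0:ℝ), r ^ n * max (1 - r ^ 2) 0 ^ q = V := by
  have hcont : Continuous fun r : ℝ => r ^ n * max (1 - r ^ 2) 0 ^ q := by
    apply Continuous.mul (by continuity)
    apply Continuous.rpow_const (by continuity)
    exact fun v => Or.inr hq.le
  have hzero : ∀ r ∈ Ioi (1:ℝ), r ^ n * max (1 - r ^ 2) 0 ^ q = 0 := by
    intro r hr
    simp only [mem_Ioi] at hr
    rw [max_eq_right (by nlinarith), Real.zero_rpow hq.ne', mul_zero]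
  rw [← Ioc_union_Ioi_eq_Ioi (zero_le_one' ℝ),
    setIntegral_union (Ioc_disjoint_Ioi le_rfl) measurableSet_Ioi
      (hcont.integrableOn_Ioc)
      ((integrableOn_congr_fun hzero measurableSet_Ioi).mpr (integrableOn_zero))]
  rw [setIntegral_congr_fun measurableSet_Ioi hzero, integral_zero, add_zero]
  rw [← intervalIntegral.integral_of_le (zero_le_one' ℝ)]
  rw [← hval]
  apply intervalIntegral.integral_congr
  intro r hr
  rw [uIcc_of_le (zero_le_one' ℝ)] at hr
  have : (0:ℝ) ≤ 1 - r ^ 2 := by nlinarith [hr.1, hr.2]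
  simp only [max_eq_left this]

lemma polar_step_s10 {q : ℝ} (P : ℝ × ℝ → ℝ) (rad ang : ℝ → ℝ)
    (hP : ∀ p : ℝ × ℝ, p.1 • (P (polarCoord.symm p) * gq q (polarCoord.symm p))
      = rad p.1 * ang p.2) :
    ∫ v : ℝ × ℝ, P v * gq q v
      = (∫ r in Ioi (0:ℝ), rad r) * ∫ θ in Ioo (-π) π, ang θ := by
  rw [← integral_comp_polarCoord_symm (fun v => P v * gq q v), polarCoord_target]
  rw [setIntegral_congr_fun (measurableSet_Ioi.prod measurableSet_Ioo)
    (fun p _ => hP p)]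
  rw [Measure.volume_eq_prod]
  exact setIntegral_prod_mul rad ang _ _

lemma angle_one : (∫ _θ in Ioo (-π) π, (1:ℝ)) = 2 * π := by
  simp [Real.volume_Ioo]
  rw [max_eq_left (by positivity)]
  ring

lemma angle_cos : (∫ θ in Ioo (-π) π, cos θ ^ 2) = π := by
  rw [← integral_Ioc_eq_integral_Ioo,
    ← intervalIntegral.integral_of_le (by linarith [pi_pos]), integral_cos_sq]
  simp

lemma angle_sin : (∫ θ in Ioo (-π) π, sin θ ^ 2) = π := by
  rw [← integral_Ioc_eq_integral_Ioo,
    ← intervalIntegral.integral_of_le (by linarith [pi_pos]), integral_sin_sq]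
  simp

lemma polar_radius_sq (p : ℝ × ℝ) :
    1 - (p.1 * cos p.2) ^ 2 - (p.1 * sin p.2) ^ 2 = 1 - p.1 ^ 2 := by
  linear_combination (-(p.1 ^ 2)) * (sin_sq_add_cos_sq p.2)

lemma intA {q : ℝ} (hq : 0 < q) : ∫ v : ℝ × ℝ, gq q v = π / (q + 1) := by
  have h := polar_step_s10 (q := q) (fun _ => 1)
    (fun r => r ^ 1 * max (1 - r ^ 2) 0 ^ q) (fun _ => 1) ?_
  · have h2 : (∫ v : ℝ × ℝ, gq q v) = ∫ v : ℝ × ℝ, (fun _ => (1:ℝ)) v * gq q v := by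
      simp
    rw [h2, h, radial_s10 hq 1 _ (int01_1 hq), angle_one]
    have hq1 : q + 1 ≠ 0 := by positivity
    field_simp
  · intro p
    rw [polarCoord_symm_apply]
    unfold gq
    simp only [smul_eq_mul, one_mul, mul_one, pow_one]
    rw [polar_radius_sq ⟨p.1, p.2⟩]

lemma intC1 {q : ℝ} (hq : 0 < q) :
    ∫ v : ℝ × ℝ, v.1 ^ 2 * gq q v = π / (2 * (q + 1) * (q + 2)) := by
  have h := polar_step_s10 (q := q) (fun v => v.1 ^ 2)
    (fun r => r ^ 3 * max (1 - r ^ 2) 0 ^ q) (fun θ => cos θ ^ 2) ?_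
  · rw [h, radial_s10 hq 3 _ (int01_3 hq), angle_cos]
    ring
  · intro p
    rw [polarCoord_symm_apply]
    unfold gq
    simp only [smul_eq_mul]
    rw [polar_radius_sq ⟨p.1, p.2⟩]
    ring

lemma intC2 {q : ℝ} (hq : 0 < q) :
    ∫ v : ℝ × ℝ, v.2 ^ 2 * gq q v = π / (2 * (q + 1) * (q + 2)) := by
  have h := polar_step_s10 (q := q) (fun v => v.2 ^ 2)
    (fun r => r ^ 3 * max (1 - r ^ 2) 0 ^ q) (fun θ => sin θ ^ 2) ?_
  · rw [h, radial_s10 hq 3 _ (int01_3 hq), angle_sin]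
    ring
  · intro p
    rw [polarCoord_symm_apply]
    unfold gq
    simp only [smul_eq_mul]
    rw [polar_radius_sq ⟨p.1, p.2⟩]
    ring

lemma gq_neg (q : ℝ) (v : ℝ × ℝ) : gq q (-v) = gq q v := by
  unfold gq
  simp [Prod.fst_neg, Prod.snd_neg, neg_sq]

lemma intB1 {q : ℝ} : ∫ v : ℝ × ℝ, v.1 * gq q v = 0 := by
  have h := integral_neg_eq_self (fun v : ℝ × ℝ => v.1 * gq q v) volume
  simp only [Prod.fst_neg, gq_neg, neg_mul] at h
  rw [integral_neg] at h
  linarith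

lemma intB2 {q : ℝ} : ∫ v : ℝ × ℝ, v.2 * gq q v = 0 := by
  have h := integral_neg_eq_self (fun v : ℝ × ℝ => v.2 * gq q v) volume
  simp only [Prod.snd_neg, gq_neg, neg_mul] at h
  rw [integral_neg] at h
  linarith

lemma integral_scale (f : ℝ × ℝ → ℝ) (hc : Continuous f) (hcs : HasCompactSupport f)
    (s₁ s₂ : ℝ) (h1 : 0 < s₁) (h2 : 0 < s₂) :
    ∫ u : ℝ × ℝ, f u = (s₁ * s₂) * ∫ v : ℝ × ℝ, f (s₁ * v.1, s₂ * v.2) := by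
  have hint : Integrable f ((volume : Measure ℝ).prod volume) := by
    rw [← Measure.volume_eq_prod]
    exact hc.integrable_of_hasCompactSupport hcs
  have hcs2 : HasCompactSupport fun v : ℝ × ℝ => f (s₁ * v.1, s₂ * v.2) :=
    hcs.comp_homeomorph
      ((Homeomorph.mulLeft₀ s₁ h1.ne').prodCongr (Homeomorph.mulLeft₀ s₂ h2.ne'))
  have hint2 : Integrable (fun v : ℝ × ℝ => f (s₁ * v.1, s₂ * v.2))
      ((volume : Measure ℝ).prod volume) := by
    rw [← Measure.volume_eq_prod]
    exact (hc.comp (by continuity)).integrable_of_hasCompactSupport hcs2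
  rw [Measure.volume_eq_prod, integral_prod _ hint, integral_prod _ hint2]
  have inner : ∀ x : ℝ, (∫ y : ℝ, f (s₁ * x, s₂ * y)) = |s₂⁻¹| • ∫ y : ℝ, f (s₁ * x, y) :=
    fun x => Measure.integral_comp_mul_left (fun y => f (s₁ * x, y)) s₂
  simp_rw [inner]
  rw [integral_smul]
  rw [Measure.integral_comp_mul_left (fun x => ∫ y : ℝ, f (x, y)) s₁]
  rw [abs_of_pos (inv_pos.mpr h2), abs_of_pos (inv_pos.mpr h1), smul_smul, smul_eq_mul,
    ← mul_assoc]
  rw [show s₁ * s₂ * (s₂⁻¹ * s₁⁻¹) = 1 by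
    rw [mul_comm s₂⁻¹ s₁⁻¹, ← mul_inv]; exact mul_inv_cancel₀ (by positivity), one_mul]

lemma norm_const {p γ κ b : ℝ} (hp : 1 < p) (hγ : 0 < γ) (hκ : 0 < κ) (hb : 0 < b)
    {ψ : ℝ}
    (hψ : ψ = ((1 / π) * Real.sqrt (κ * b)) ^ ((p - 1) / p) * (p / (p - 1)) * γ ^ (1 / p)) :
    ((p - 1) / (γ * p)) ^ (1 / (p - 1)) * ψ ^ (1 / (p - 1)) * (ψ / Real.sqrt (κ * b))
      * (π / (1 / (p - 1) + 1)) = 1 := by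
  have hp0 : (0:ℝ) < p := by linarith
  have hp1 : (0:ℝ) < p - 1 := by linarith
  have hπ : (0:ℝ) < π := pi_pos
  have hs : (0:ℝ) < Real.sqrt (κ * b) := Real.sqrt_pos.mpr (by positivity)
  have hA : (0:ℝ) < (1 / π) * Real.sqrt (κ * b) := by positivity
  have hψ0 : (0:ℝ) < ψ := by
    rw [hψ]
    have := Real.rpow_pos_of_pos hA ((p - 1) / p)
    have := Real.rpow_pos_of_pos hγ (1 / p)
    positivity
  set A := (1 / π) * Real.sqrt (κ * b) with hA_def
  have hq1 : 1 / (p - 1) + 1 = p / (p - 1) := by field_simp; ring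
  have hpow : ψ ^ (1 / (p - 1)) * ψ = ψ ^ (p / (p - 1)) := by
    rw [← Real.rpow_add_one hψ0.ne' (1 / (p - 1)), hq1]
  have hx : (0:ℝ) < p / (p - 1) := by positivity
  have hexp : ψ ^ (p / (p - 1))
      = A * (p / (p - 1)) ^ (p / (p - 1)) * γ ^ (1 / (p - 1)) := by
    rw [hψ]
    rw [Real.mul_rpow (by positivity) (by positivity),
        Real.mul_rpow (by positivity) (by positivity)]
    rw [← Real.rpow_mul hA.le, ← Real.rpow_mul hγ.le,
      show (p - 1) / p * (p / (p - 1)) = 1 by field_simp,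
      show 1 / p * (p / (p - 1)) = 1 / (p - 1) by field_simp,
      Real.rpow_one]
  have hcomb : ((p - 1) / (γ * p)) ^ (1 / (p - 1)) * γ ^ (1 / (p - 1))
      = ((p - 1) / p) ^ (1 / (p - 1)) := by
    rw [← Real.mul_rpow (by positivity) hγ.le]
    congr 1
    field_simp
  have hcomb2 : ((p - 1) / p) ^ (1 / (p - 1)) * (p / (p - 1)) ^ (p / (p - 1))
      = p / (p - 1) := by
    rw [show (p - 1) / p = (p / (p - 1))⁻¹ by rw [inv_div]]
    rw [← Real.rpow_neg_one (p / (p - 1)), ← Real.rpow_mul hx.le, ← Real.rpow_add hx]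
    rw [show -1 * (1 / (p - 1)) + p / (p - 1) = 1 by field_simp; ring]
    exact Real.rpow_one _
  calc ((p - 1) / (γ * p)) ^ (1 / (p - 1)) * ψ ^ (1 / (p - 1)) * (ψ / Real.sqrt (κ * b))
      * (π / (1 / (p - 1) + 1))
      = ((p - 1) / (γ * p)) ^ (1 / (p - 1)) * (ψ ^ (1 / (p - 1)) * ψ)
        / Real.sqrt (κ * b) * (π / (p / (p - 1))) := by rw [hq1]; ring
    _ = ((p - 1) / (γ * p)) ^ (1 / (p - 1))
        * (A * (p / (p - 1)) ^ (p / (p - 1)) * γ ^ (1 / (p - 1)))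
        / Real.sqrt (κ * b) * (π / (p / (p - 1))) := by rw [hpow, hexp]
    _ = (((p - 1) / (γ * p)) ^ (1 / (p - 1)) * γ ^ (1 / (p - 1)))
        * (((p - 1) / p) ^ (1 / (p - 1)))⁻¹
        * ((((p - 1) / p) ^ (1 / (p - 1)) * (p / (p - 1)) ^ (p / (p - 1))))
        * A / Real.sqrt (κ * b) * (π / (p / (p - 1))) := by
          have h0 : ((p - 1) / p) ^ (1 / (p - 1)) ≠ 0 :=
            (Real.rpow_pos_of_pos (by positivity) _).ne'
          field_simp
    _ = ((p - 1) / p) ^ (1 / (p - 1)) * (((p - 1) / p) ^ (1 / (p - 1)))⁻¹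
        * (p / (p - 1)) * A / Real.sqrt (κ * b) * (π / (p / (p - 1))) := by
          rw [hcomb, hcomb2]
    _ = 1 := by
          rw [mul_inv_cancel₀ (Real.rpow_pos_of_pos (by positivity) _).ne']
          rw [hA_def]
          field_simp

theorem qGaussian_ellipse_moments (p γ κ lam α m₁ m₂ : ℝ)
    (hp : 1 < p) (hγ : 0 < γ) (hκ : 0 < κ) (hlam : 0 < lam) (hα : α < 0)
    (ψ : ℝ)
    (hψ : ψ = ((1 / Real.pi) * Real.sqrt (-lam * κ * α / 2)) ^ ((p - 1) / p)
      * (p / (p - 1)) * γ ^ (1 / p))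
    (ρ : ℝ × ℝ → ℝ)
    (hρ : ∀ u : ℝ × ℝ, ρ u = ((p - 1) / (γ * p)) ^ (1 / (p - 1)) *
      (max (ψ - κ * (u.1 - m₁) ^ 2 + α * lam / 2 * (u.2 - m₂) ^ 2) 0) ^ (1 / (p - 1))) :
    (∫ u : ℝ × ℝ, u.1 * ρ u) = m₁ ∧
    (∫ u : ℝ × ℝ, u.2 * ρ u) = m₂ ∧
    (∫ u : ℝ × ℝ, u.1 ^ 2 * ρ u) = ψ * (p - 1) / (2 * κ * (2 * p - 1)) + m₁ ^ 2 ∧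
    (∫ u : ℝ × ℝ, u.2 ^ 2 * ρ u) = -(ψ * (p - 1)) / (α * lam * (2 * p - 1)) + m₂ ^ 2 := by
  have hp1 : (0:ℝ) < p - 1 := by linarith
  set q : ℝ := 1 / (p - 1) with hqdef
  have hq : 0 < q := by positivity
  have hq1 : (0:ℝ) < q + 1 := by linarith
  have hq2 : (0:ℝ) < q + 2 := by linarith
  set b : ℝ := -(α * lam) / 2 with hbdef
  have hb : 0 < b := by
    have : α * lam < 0 := mul_neg_of_neg_of_pos hα hlam
    rw [hbdef]
    linarith
  have hψ2 : ψ = ((1 / π) * Real.sqrt (κ * b)) ^ ((p - 1) / p) * (p / (p - 1))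
      * γ ^ (1 / p) := by
    rw [hψ, show -lam * κ * α / 2 = κ * b by rw [hbdef]; ring]
  have hψ0 : 0 < ψ := by
    rw [hψ2]
    have hA : (0:ℝ) < (1 / π) * Real.sqrt (κ * b) := by
      have := Real.sqrt_pos.mpr (mul_pos hκ hb)
      positivity
    have := Real.rpow_pos_of_pos hA ((p - 1) / p)
    have := Real.rpow_pos_of_pos hγ (1 / p)
    positivity
  set s₁ := Real.sqrt (ψ / κ) with hs1def
  set s₂ := Real.sqrt (ψ / b) with hs2def
  have hs1 : 0 < s₁ := Real.sqrt_pos.mpr (by positivity)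
  have hs2 : 0 < s₂ := Real.sqrt_pos.mpr (by positivity)
  have hs1sq : s₁ ^ 2 = ψ / κ := Real.sq_sqrt (by positivity)
  have hs2sq : s₂ ^ 2 = ψ / b := Real.sq_sqrt (by positivity)
  have hss : s₁ * s₂ = ψ / Real.sqrt (κ * b) := by
    rw [hs1def, hs2def, ← Real.sqrt_mul (by positivity),
      show ψ / κ * (ψ / b) = ψ ^ 2 / (κ * b) by ring,
      Real.sqrt_div (by positivity) _, Real.sqrt_sq hψ0.le]
  set K := ((p - 1) / (γ * p)) ^ q * ψ ^ q with hKdef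
  have hNorm : K * (s₁ * s₂) * (π / (q + 1)) = 1 := by
    rw [hKdef, hss, hqdef]
    have := norm_const hp hγ hκ hb hψ2
    linear_combination this
  have e1 : s₁ * s₂ * (K * (π / (q + 1))) = 1 := by linear_combination hNorm
  have e2 : s₁ * s₂ * (K * (π / (2 * (q + 1) * (q + 2)))) = 1 / (2 * (q + 2)) := by
    have h2 : π / (2 * (q + 1) * (q + 2)) = (π / (q + 1)) * (1 / (2 * (q + 2))) := by
      rw [div_mul_div_comm, mul_one,
        show (q + 1) * (2 * (q + 2)) = 2 * (q + 1) * (q + 2) from by ring]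
    calc s₁ * s₂ * (K * (π / (2 * (q + 1) * (q + 2))))
        = (K * (s₁ * s₂) * (π / (q + 1))) * (1 / (2 * (q + 2))) := by rw [h2]; ring
      _ = 1 / (2 * (q + 2)) := by rw [hNorm]; ring
  have key : ∀ v : ℝ × ℝ, ρ (s₁ * v.1 + m₁, s₂ * v.2 + m₂) = K * gq q v := by
    intro v
    rw [hρ]
    simp only
    rw [show s₁ * v.1 + m₁ - m₁ = s₁ * v.1 by ring,
      show s₂ * v.2 + m₂ - m₂ = s₂ * v.2 by ring]
    rw [show ψ - κ * (s₁ * v.1) ^ 2 + α * lam / 2 * (s₂ * v.2) ^ 2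
        = ψ * (1 - v.1 ^ 2 - v.2 ^ 2) by
      rw [mul_pow, mul_pow, hs1sq, hs2sq]
      have hb' : b ≠ 0 := hb.ne'
      have : α * lam / 2 = -b := by rw [hbdef]; ring
      rw [this]
      field_simp
      ring]
    rw [show max (ψ * (1 - v.1 ^ 2 - v.2 ^ 2)) 0 = ψ * max (1 - v.1 ^ 2 - v.2 ^ 2) 0 by
      rw [mul_max_of_nonneg _ _ hψ0.le, mul_zero]]
    rw [Real.mul_rpow hψ0.le (le_max_right _ _)]
    unfold gq
    rw [hKdef]
    ring
  have hρ_eq : ρ = fun u : ℝ × ℝ => K * gq q ((u.1 - m₁) / s₁, (u.2 - m₂) / s₂) := by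
    funext u
    have h := key ((u.1 - m₁) / s₁, (u.2 - m₂) / s₂)
    simp only at h
    rw [show s₁ * ((u.1 - m₁) / s₁) + m₁ = u.1 by field_simp; ring,
        show s₂ * ((u.2 - m₂) / s₂) + m₂ = u.2 by field_simp; ring] at h
    simpa using h
  have hρc : Continuous ρ := by
    rw [hρ_eq]
    exact continuous_const.mul ((gq_cont hq).comp
      (((continuous_fst.sub continuous_const).div_const s₁).prodMk
        ((continuous_snd.sub continuous_const).div_const s₂)))
  have hρcs : HasCompactSupport ρ := by
    rw [hρ_eq]
    apply HasCompactSupport.intro (isCompact_closedBall ((m₁, m₂) : ℝ × ℝ) (s₁ + s₂))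
    intro u hu
    have hzero : 1 - ((u.1 - m₁) / s₁) ^ 2 - ((u.2 - m₂) / s₂) ^ 2 ≤ 0 := by
      simp only [Metric.mem_closedBall, not_le, Prod.dist_eq, Real.dist_eq] at hu
      rcases lt_sup_iff.mp hu with h | h
      · have hx : s₁ < |u.1 - m₁| := by linarith
        have h2 : s₁ ^ 2 < (u.1 - m₁) ^ 2 := by
          have h5 := pow_lt_pow_left₀ hx hs1.le two_ne_zero
          rwa [sq_abs] at h5
        have h3 : 1 < ((u.1 - m₁) / s₁) ^ 2 := by
          rw [div_pow, lt_div_iff₀ (pow_pos hs1 2)]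
          linarith
        have h4 := sq_nonneg ((u.2 - m₂) / s₂)
        linarith
      · have hx : s₂ < |u.2 - m₂| := by linarith
        have h2 : s₂ ^ 2 < (u.2 - m₂) ^ 2 := by
          have h5 := pow_lt_pow_left₀ hx hs2.le two_ne_zero
          rwa [sq_abs] at h5
        have h3 : 1 < ((u.2 - m₂) / s₂) ^ 2 := by
          rw [div_pow, lt_div_iff₀ (pow_pos hs2 2)]
          linarith
        have h4 := sq_nonneg ((u.1 - m₁) / s₁)
        linarith
    rw [gq_zero hq hzero, mul_zero]
  have master : ∀ w : ℝ × ℝ → ℝ, Continuous w →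
      (∫ u : ℝ × ℝ, w u * ρ u)
        = s₁ * s₂ * ∫ v : ℝ × ℝ, w (s₁ * v.1 + m₁, s₂ * v.2 + m₂) * (K * gq q v) := by
    intro w hw
    have hshift : (∫ u : ℝ × ℝ, w (u.1 + m₁, u.2 + m₂) * ρ (u.1 + m₁, u.2 + m₂))
        = ∫ u : ℝ × ℝ, w u * ρ u :=
      integral_add_right_eq_self (fun u : ℝ × ℝ => w u * ρ u) ((m₁, m₂) : ℝ × ℝ)
    rw [← hshift]
    have hFc : Continuous fun u : ℝ × ℝ =>
        w (u.1 + m₁, u.2 + m₂) * ρ (u.1 + m₁, u.2 + m₂) :=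
      (hw.comp ((continuous_fst.add continuous_const).prodMk
          (continuous_snd.add continuous_const))).mul
        (hρc.comp ((continuous_fst.add continuous_const).prodMk
          (continuous_snd.add continuous_const)))
    have hFcs : HasCompactSupport
        fun u : ℝ × ℝ => w (u.1 + m₁, u.2 + m₂) * ρ (u.1 + m₁, u.2 + m₂) :=
      HasCompactSupport.mul_left
        (hρcs.comp_homeomorph (Homeomorph.addRight ((m₁, m₂) : ℝ × ℝ)))
    rw [integral_scale _ hFc hFcs s₁ s₂ hs1 hs2]
    simp only [key]
  refine ⟨?_, ?_, ?_, ?_⟩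
  · have h := master (fun u => u.1) continuous_fst
    simp only at h
    rw [h]
    have expand : ∀ v : ℝ × ℝ, (s₁ * v.1 + m₁) * (K * gq q v)
        = (s₁ * K) * (v.1 * gq q v) + (m₁ * K) * gq q v := fun v => by ring
    simp only [expand]
    rw [integral_add
        ((gq_int hq (P := fun v : ℝ × ℝ => v.1) continuous_fst).const_mul _)
        ((gq_integrable hq).const_mul _),
      integral_const_mul, integral_const_mul, intB1, intA hq]
    linear_combination m₁ * e1
  · have h := master (fun u => u.2) continuous_snd
    simp only at h
    rw [h]
    have expand : ∀ v : ℝ × ℝ, (s₂ * v.2 + m₂) * (K * gq q v)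
        = (s₂ * K) * (v.2 * gq q v) + (m₂ * K) * gq q v := fun v => by ring
    simp only [expand]
    rw [integral_add
        ((gq_int hq (P := fun v : ℝ × ℝ => v.2) continuous_snd).const_mul _)
        ((gq_integrable hq).const_mul _),
      integral_const_mul, integral_const_mul, intB2, intA hq]
    linear_combination m₂ * e1
  · have h := master (fun u => u.1 ^ 2) (continuous_fst.pow 2)
    simp only at h
    rw [h]
    have expand : ∀ v : ℝ × ℝ, (s₁ * v.1 + m₁) ^ 2 * (K * gq q v)
        = (s₁ ^ 2 * K) * (v.1 ^ 2 * gq q v)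
          + ((2 * s₁ * m₁ * K) * (v.1 * gq q v) + (m₁ ^ 2 * K) * gq q v) := fun v => by ring
    simp only [expand]
    have i1 : Integrable (fun v : ℝ × ℝ => s₁ ^ 2 * K * (v.1 ^ 2 * gq q v)) :=
      (gq_int hq (P := fun v : ℝ × ℝ => v.1 ^ 2) (continuous_fst.pow 2)).const_mul _
    have i2 : Integrable (fun v : ℝ × ℝ => 2 * s₁ * m₁ * K * (v.1 * gq q v)) :=
      (gq_int hq (P := fun v : ℝ × ℝ => v.1) continuous_fst).const_mul _
    have i3 : Integrable (fun v : ℝ × ℝ => m₁ ^ 2 * K * gq q v) :=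
      (gq_integrable hq).const_mul _
    have i23 : Integrable (fun v : ℝ × ℝ =>
        2 * s₁ * m₁ * K * (v.1 * gq q v) + m₁ ^ 2 * K * gq q v) := i2.add i3
    rw [integral_add i1 i23, integral_add i2 i3,
      integral_const_mul, integral_const_mul, integral_const_mul,
      intC1 hq, intB1, intA hq]
    have htar : ψ * (p - 1) / (2 * κ * (2 * p - 1)) = (ψ / κ) / (2 * (q + 2)) := by
      rw [hqdef]
      have h2p : (0:ℝ) < 2 * p - 1 := by linarith
      field_simp
      rw [div_eq_iff (by linarith)]; ring
    rw [htar, hs1sq]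
    linear_combination (ψ / κ) * e2 + m₁ ^ 2 * e1
  · have h := master (fun u => u.2 ^ 2) (continuous_snd.pow 2)
    simp only at h
    rw [h]
    have expand : ∀ v : ℝ × ℝ, (s₂ * v.2 + m₂) ^ 2 * (K * gq q v)
        = (s₂ ^ 2 * K) * (v.2 ^ 2 * gq q v)
          + ((2 * s₂ * m₂ * K) * (v.2 * gq q v) + (m₂ ^ 2 * K) * gq q v) := fun v => by ring
    simp only [expand]
    have i1 : Integrable (fun v : ℝ × ℝ => s₂ ^ 2 * K * (v.2 ^ 2 * gq q v)) :=
      (gq_int hq (P := fun v : ℝ × ℝ => v.2 ^ 2) (continuous_snd.pow 2)).const_mul _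
    have i2 : Integrable (fun v : ℝ × ℝ => 2 * s₂ * m₂ * K * (v.2 * gq q v)) :=
      (gq_int hq (P := fun v : ℝ × ℝ => v.2) continuous_snd).const_mul _
    have i3 : Integrable (fun v : ℝ × ℝ => m₂ ^ 2 * K * gq q v) :=
      (gq_integrable hq).const_mul _
    have i23 : Integrable (fun v : ℝ × ℝ =>
        2 * s₂ * m₂ * K * (v.2 * gq q v) + m₂ ^ 2 * K * gq q v) := i2.add i3
    rw [integral_add i1 i23, integral_add i2 i3,
      integral_const_mul, integral_const_mul, integral_const_mul,
      intC2 hq, intB2, intA hq]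
    have htar : -(ψ * (p - 1)) / (α * lam * (2 * p - 1)) = (ψ / b) / (2 * (q + 2)) := by
      have h2p : (0:ℝ) < 2 * p - 1 := by linarith
      have hd1 : α * lam * (2 * p - 1) ≠ 0 :=
        (mul_neg_of_neg_of_pos (mul_neg_of_neg_of_pos hα hlam) h2p).ne
      have hd2 : (2:ℝ) * (q + 2) ≠ 0 := by positivity
      have hq3 : (q + 2) * (p - 1) = 2 * p - 1 := by rw [hqdef]; field_simp; ring
      rw [div_div, div_eq_div_iff hd1 (mul_ne_zero hb.ne' hd2), hbdef]
      linear_combination ψ * (α * lam) * hq3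
    rw [htar, hs2sq]
    linear_combination (ψ / b) * e2 + m₂ ^ 2 * e1
end
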